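/- For any q ∈ (-1,1) and λ ∈ (0,1), the sequence s_n = (1/n)·∑_{m=1}^n ∑_{ℓ=1}^m ∑_{k=0}^{m-1} q^{(m-k)ℓ} · λ^{(k-ℓ)/2} converges to 0 as n → ∞. -/

import Mathlib

open Filter

private lemma aux_nat_add_le_mul {a b : ℕ} (ha : 1 ≤ a) (hb : 1 ≤ b) :
    a + b ≤ a * b + 1 := by
  obtain ⟨a', rfl⟩ := Nat.exists_eq_add_of_le ha
  obtain ⟨b', rfl⟩ := Nat.exists_eq_add_of_le hb
  ring_nf
  nlinarith

private lemma aux_key (q lam : ℝ) (hq : q ∈ Set.Ioo (-1 : ℝ) 1)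
    (hlam : lam ∈ Set.Ioo (0 : ℝ) 1) :
    Tendsto (fun m : ℕ => ∑ ℓ ∈ Finset.Icc 1 m, ∑ k ∈ Finset.range m,
      q ^ ((m - k) * ℓ) * lam ^ (((k : ℝ) - (ℓ : ℝ)) / 2)) atTop (nhds 0) := by
  obtain ⟨hq1, hq2⟩ := hq
  obtain ⟨hl0, hl1⟩ := hlam
  set b : ℝ := |q| with hb
  have hb0 : 0 ≤ b := abs_nonneg q
  have hb1 : b < 1 := abs_lt.mpr ⟨hq1, hq2⟩
  set s : ℝ := lam ^ ((1 : ℝ) / 2) with hs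
  have hs0 : 0 < s := Real.rpow_pos_of_pos hl0 _
  have hs1 : s < 1 := Real.rpow_lt_one hl0.le hl1 (by norm_num)
  set u : ℝ := s⁻¹ with hu
  have hu0 : 0 < u := inv_pos.mpr hs0
  set c : ℝ := max b s with hc
  have hc0 : 0 < c := lt_of_lt_of_le hs0 (le_max_right _ _)
  have hc1 : c < 1 := max_lt hb1 hs1
  -- the dominating sequence
  set g : ℕ → ℝ := fun m =>
    c⁻¹ * ((m : ℝ) ^ 2 * c ^ m) + u * ((m : ℝ) ^ 2 * b ^ m) with hg
  have hgt : Tendsto g atTop (nhds 0) := by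
    have h1 := (tendsto_pow_const_mul_const_pow_of_lt_one 2 hc0.le hc1).const_mul c⁻¹
    have h2 := (tendsto_pow_const_mul_const_pow_of_lt_one 2 hb0 hb1).const_mul u
    simpa using h1.add h2
  have habs : Tendsto (fun m : ℕ => |∑ ℓ ∈ Finset.Icc 1 m, ∑ k ∈ Finset.range m,
      q ^ ((m - k) * ℓ) * lam ^ (((k : ℝ) - (ℓ : ℝ)) / 2)|) atTop (nhds 0) := by
    apply squeeze_zero' (Eventually.of_forall fun _ => abs_nonneg _) _ hgt
    have hev1 : ∀ᶠ m : ℕ in atTop, 1 ≤ m := eventually_ge_atTop 1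
    have hev2 : ∀ᶠ m : ℕ in atTop, u * b ^ m ≤ 1 := by
      have : Tendsto (fun m : ℕ => u * b ^ m) atTop (nhds 0) := by
        simpa using (tendsto_pow_atTop_nhds_zero_of_lt_one hb0 hb1).const_mul u
      exact this.eventually_le_const one_pos
    filter_upwards [hev1, hev2] with m hm1 hm2
    -- per-term bound
    have hterm : ∀ ℓ ∈ Finset.Icc 1 m, ∀ k ∈ Finset.range m,
        |q ^ ((m - k) * ℓ) * lam ^ (((k : ℝ) - (ℓ : ℝ)) / 2)|
          ≤ c ^ (m - 1) + u * b ^ m := by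
      intro ℓ hℓ k hk
      rw [Finset.mem_Icc] at hℓ
      rw [Finset.mem_range] at hk
      have hℓ1 : 1 ≤ ℓ := hℓ.1
      have hℓm : ℓ ≤ m := hℓ.2
      have hkm : k < m := hk
      have hlpos : (0 : ℝ) < lam ^ (((k : ℝ) - (ℓ : ℝ)) / 2) :=
        Real.rpow_pos_of_pos hl0 _
      rw [abs_mul, abs_pow, abs_of_pos hlpos]
      rcases le_or_gt ℓ k with hcase | hcase
      · -- ℓ ≤ k : bound by c ^ (m-1)
        have hrw : lam ^ (((k : ℝ) - (ℓ : ℝ)) / 2) = s ^ (k - ℓ) := by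
          have : ((k : ℝ) - (ℓ : ℝ)) / 2 = (1 / 2) * (((k - ℓ : ℕ) : ℝ)) := by
            rw [Nat.cast_sub hcase]; ring
          rw [this, Real.rpow_mul hl0.le, Real.rpow_natCast]
        rw [hrw]
        have h1 : b ^ ((m - k) * ℓ) ≤ c ^ ((m - k) * ℓ) :=
          pow_le_pow_left₀ hb0 (le_max_left _ _) _
        have h2 : s ^ (k - ℓ) ≤ c ^ (k - ℓ) :=
          pow_le_pow_left₀ hs0.le (le_max_right _ _) _
        have h3 : b ^ ((m - k) * ℓ) * s ^ (k - ℓ)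
            ≤ c ^ ((m - k) * ℓ + (k - ℓ)) := by
          rw [pow_add]
          exact mul_le_mul h1 h2 (pow_nonneg hs0.le _) (pow_nonneg hc0.le _)
        have hexp : m - 1 ≤ (m - k) * ℓ + (k - ℓ) := by
          have hmk : 1 ≤ m - k := by omega
          have := aux_nat_add_le_mul hmk hℓ1
          omega
        have h4 : c ^ ((m - k) * ℓ + (k - ℓ)) ≤ c ^ (m - 1) :=
          pow_le_pow_of_le_one hc0.le hc1.le hexp
        have h5 : (0 : ℝ) ≤ u * b ^ m :=
          mul_nonneg hu0.le (pow_nonneg hb0 _)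
        linarith
      · -- k < ℓ : bound by u * b ^ m
        have hrw : lam ^ (((k : ℝ) - (ℓ : ℝ)) / 2) = u ^ (ℓ - k) := by
          have : ((k : ℝ) - (ℓ : ℝ)) / 2 = -((1 / 2) * (((ℓ - k : ℕ) : ℝ))) := by
            rw [Nat.cast_sub hcase.le]; ring
          rw [this, Real.rpow_neg hl0.le, Real.rpow_mul hl0.le, Real.rpow_natCast,
            hu, inv_pow]
        rw [hrw]
        have hmul : m * (ℓ - k) ≤ (m - k) * ℓ := by
          calc m * (ℓ - k) = m * ℓ - m * k := by
                rw [Nat.mul_sub]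
            _ ≤ m * ℓ - k * ℓ := by
                have : k * ℓ ≤ m * k := by
                  calc k * ℓ = ℓ * k := Nat.mul_comm k ℓ
                    _ ≤ m * k := Nat.mul_le_mul_right k hℓm
                omega
            _ = (m - k) * ℓ := by rw [Nat.sub_mul]
        have h1 : b ^ ((m - k) * ℓ) ≤ b ^ (m * (ℓ - k)) :=
          pow_le_pow_of_le_one hb0 hb1.le hmul
        have h2 : b ^ ((m - k) * ℓ) * u ^ (ℓ - k) ≤ (u * b ^ m) ^ (ℓ - k) := by
          rw [mul_pow, ← pow_mul]
          calc b ^ ((m - k) * ℓ) * u ^ (ℓ - k)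
              ≤ b ^ (m * (ℓ - k)) * u ^ (ℓ - k) :=
                mul_le_mul_of_nonneg_right h1 (pow_nonneg hu0.le _)
            _ = u ^ (ℓ - k) * b ^ (m * (ℓ - k)) := mul_comm _ _
        have hd : ℓ - k ≠ 0 := by omega
        have h3 : (u * b ^ m) ^ (ℓ - k) ≤ u * b ^ m :=
          pow_le_of_le_one (mul_nonneg hu0.le (pow_nonneg hb0 _)) hm2 hd
        have h4 : (0 : ℝ) ≤ c ^ (m - 1) := pow_nonneg hc0.le _
        linarith
    -- sum up the bounds
    have hcard : ∑ ℓ ∈ Finset.Icc 1 m, ∑ k ∈ Finset.range m,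
        (c ^ (m - 1) + u * b ^ m)
        = (m : ℝ) ^ 2 * (c ^ (m - 1) + u * b ^ m) := by
      rw [Finset.sum_const, Finset.sum_const, Nat.card_Icc, Finset.card_range,
        nsmul_eq_mul, nsmul_eq_mul]
      push_cast
      ring
    calc |∑ ℓ ∈ Finset.Icc 1 m, ∑ k ∈ Finset.range m,
          q ^ ((m - k) * ℓ) * lam ^ (((k : ℝ) - (ℓ : ℝ)) / 2)|
        ≤ ∑ ℓ ∈ Finset.Icc 1 m, |∑ k ∈ Finset.range m,
            q ^ ((m - k) * ℓ) * lam ^ (((k : ℝ) - (ℓ : ℝ)) / 2)| :=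
          Finset.abs_sum_le_sum_abs _ _
      _ ≤ ∑ ℓ ∈ Finset.Icc 1 m, ∑ k ∈ Finset.range m,
            |q ^ ((m - k) * ℓ) * lam ^ (((k : ℝ) - (ℓ : ℝ)) / 2)| :=
          Finset.sum_le_sum fun ℓ _ => Finset.abs_sum_le_sum_abs _ _
      _ ≤ ∑ ℓ ∈ Finset.Icc 1 m, ∑ k ∈ Finset.range m,
            (c ^ (m - 1) + u * b ^ m) :=
          Finset.sum_le_sum fun ℓ hℓ => Finset.sum_le_sum fun k hk =>
            hterm ℓ hℓ k hk
      _ = (m : ℝ) ^ 2 * (c ^ (m - 1) + u * b ^ m) := hcard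
      _ ≤ g m := by
          rw [hg]
          have hcm : c ^ (m - 1) = c⁻¹ * c ^ m := by
            rw [← pow_sub_one_mul (by omega : m ≠ 0) c]
            field_simp
          rw [hcm]
          have := sq_nonneg (m : ℝ)
          ring_nf
          nlinarith [pow_nonneg hb0 m, pow_nonneg hc0.le m, sq_nonneg (m : ℝ)]
  exact tendsto_zero_iff_abs_tendsto_zero _ |>.mpr habs

/-- Lemma 3.7 of the paper: for `q ∈ (-1,1)` and `λ ∈ (0,1)`, the sequence
`s_n = (1/n) ∑_{m=1}^n ∑_{ℓ=1}^m ∑_{k=0}^{m-1} q^{(m-k)ℓ} λ^{(k-ℓ)/2}` converges to `0`. -/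
theorem stmt7 (q lam : ℝ) (hq : q ∈ Set.Ioo (-1 : ℝ) 1) (hlam : lam ∈ Set.Ioo (0 : ℝ) 1) :
    Tendsto
      (fun n : ℕ => (n : ℝ)⁻¹ *
        ∑ m ∈ Finset.Icc 1 n, ∑ ℓ ∈ Finset.Icc 1 m, ∑ k ∈ Finset.range m,
          q ^ ((m - k) * ℓ) * lam ^ (((k : ℝ) - (ℓ : ℝ)) / 2))
      atTop (nhds 0) := by
  have hkey := aux_key q lam hq hlam
  set a : ℕ → ℝ := fun m => ∑ ℓ ∈ Finset.Icc 1 m, ∑ k ∈ Finset.range m,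
      q ^ ((m - k) * ℓ) * lam ^ (((k : ℝ) - (ℓ : ℝ)) / 2) with ha
  have hshift : Tendsto (fun i : ℕ => a (1 + i)) atTop (nhds 0) := by
    have : Tendsto (fun i : ℕ => i + 1) atTop atTop := tendsto_add_atTop_nat 1
    have h := hkey.comp this
    simpa [Function.comp_def, Nat.add_comm] using h
  have := hshift.cesaro
  apply this.congr
  intro n
  congr 1
  rw [show Finset.Icc 1 n = Finset.Ico 1 (n + 1) by rw [Finset.Ico_add_one_right_eq_Icc],
    Finset.sum_Ico_eq_sum_range]
  simp [a]
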